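/- Fix complex numbers x, x', y, y' and suppose X̃ = xI + 2yZ − X and X́ = x'I + 2y'Z − X are invertible. Let c ∈ ℂ and R > 0 be such that zI − Z is invertible for every z on the circle |z − c| = R. Then the circle integral ∮_{|z−c|=R} exp((x−x')z + (y−y')z²) · (1 + aᵀX̃⁻¹(zI−Z)⁻¹b) · (1 − aᵀ(zI−Z)⁻¹X́⁻¹b) dz equals 0. In particular, the product of a wave function from the adelic Grassmannian with its adjoint has zero residue at every pole in z. -/

import Mathlib

open Matrix

attribute [local instance] Matrix.linftyOpNormedRing Matrix.linftyOpNormedAlgebra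

variable {N : ℕ}

lemma dot_mul_dot (a b : Fin N → ℂ) (P Q : Matrix (Fin N) (Fin N) ℂ) :
    (a ⬝ᵥ P.mulVec b) * (a ⬝ᵥ Q.mulVec b) = a ⬝ᵥ (P * vecMulVec b a * Q).mulVec b := by
  have h1 : ∀ v : Fin N → ℂ, (vecMulVec b a).mulVec v = (a ⬝ᵥ v) • b := by
    intro v; ext i
    simp only [vecMulVec, mulVec, dotProduct, of_apply, Pi.smul_apply, smul_eq_mul,
      Finset.sum_mul, Finset.mul_sum]
    exact Finset.sum_congr rfl fun j _ => by ring
  rw [← Matrix.mulVec_mulVec, ← Matrix.mulVec_mulVec, h1, Matrix.mulVec_smul,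
    dotProduct_smul, smul_eq_mul, mul_comm]

lemma key_identity {M M' G X Z : Matrix (Fin N) (Fin N) ℂ} (a b : Fin N → ℂ)
    (hrank : X * Z - Z * X - 1 = Matrix.vecMulVec b a) {x x' y y' z : ℂ}
    (h1 : M * (x • 1 + (2 * y) • Z - X) = 1)
    (h2 : (x' • 1 + (2 * y') • Z - X) * M' = 1)
    (hu1 : (z • 1 - Z) * G = 1)
    (hu2 : G * (z • 1 - Z) = 1) :
    (1 + a ⬝ᵥ (M * G).mulVec b) * (1 - a ⬝ᵥ (G * M').mulVec b)
      = (1 + (2 * (y - y')) * (a ⬝ᵥ (M * M').mulVec b))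
        - ((x - x') + 2 * (y - y') * z) * (a ⬝ᵥ (M * (G * M')).mulVec b)
        + a ⬝ᵥ (M * (G * (G * M'))).mulVec b := by
  have hZG : Z * G = z • G - 1 := by
    have h : z • G - Z * G = 1 := by
      calc z • G - Z * G = (z • 1 - Z) * G := by
            rw [sub_mul, smul_mul_assoc, one_mul]
        _ = 1 := hu1
    rw [← h]; module
  have hGZ : G * Z = z • G - 1 := by
    have h : z • G - G * Z = 1 := by
      calc z • G - G * Z = G * (z • 1 - Z) := by
            rw [mul_sub, mul_smul_comm, mul_one]
        _ = 1 := hu2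
    rw [← h]; module
  have hMX : M * X = x • M + (2 * y) • (M * Z) - 1 := by
    have h : x • M + (2 * y) • (M * Z) - M * X = 1 := by
      calc x • M + (2 * y) • (M * Z) - M * X = M * (x • 1 + (2 * y) • Z - X) := by
            rw [mul_sub, mul_add, mul_smul_comm, mul_smul_comm, mul_one]
        _ = 1 := h1
    rw [← h]; module
  have hXM : X * M' = x' • M' + (2 * y') • (Z * M') - 1 := by
    have h : x' • M' + (2 * y') • (Z * M') - X * M' = 1 := by
      calc x' • M' + (2 * y') • (Z * M') - X * M'
          = (x' • 1 + (2 * y') • Z - X) * M' := by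
            rw [sub_mul, add_mul, smul_mul_assoc, smul_mul_assoc, one_mul]
        _ = 1 := h2
    rw [← h]; module
  have hBig : (M * G) * vecMulVec b a * (G * M')
      = (M * X) * (G * M') - (M * G) * (X * M') - M * (G * (G * M')) := by
    rw [← hrank]
    calc (M * G) * (X * Z - Z * X - 1) * (G * M')
        = M * (G * X * (Z * G)) * M' - M * ((G * Z) * (X * G)) * M'
            - M * (G * (G * M')) := by noncomm_ring
      _ = M * (G * X * (z • G - 1)) * M' - M * ((z • G - 1) * (X * G)) * M'
            - M * (G * (G * M')) := by rw [hZG, hGZ]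
      _ = (M * X) * (G * M') - (M * G) * (X * M') - M * (G * (G * M')) := by
          simp only [mul_sub, sub_mul, mul_smul_comm, smul_mul_assoc, mul_one, one_mul, mul_assoc]
          module
  have hA : (M * X) * (G * M')
      = x • (M * (G * M')) + (2 * y) • (M * (Z * (G * M'))) - G * M' := by
    rw [hMX]
    simp only [sub_mul, add_mul, smul_mul_assoc, one_mul, mul_assoc]
  have hB : (M * G) * (X * M')
      = x' • (M * (G * M')) + (2 * y') • (M * (G * (Z * M'))) - M * G := by
    rw [hXM]
    simp only [mul_sub, mul_add, mul_smul_comm, mul_one, mul_assoc]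
  have hZmid : M * (Z * (G * M')) = z • (M * (G * M')) - M * M' := by
    rw [← mul_assoc Z G, hZG]
    simp only [sub_mul, smul_mul_assoc, one_mul, mul_sub, mul_smul_comm]
  have hGmid : M * (G * (Z * M')) = z • (M * (G * M')) - M * M' := by
    rw [← mul_assoc G Z, hGZ]
    simp only [sub_mul, smul_mul_assoc, one_mul, mul_sub, mul_smul_comm]
  have huv : (a ⬝ᵥ (M * G).mulVec b) * (a ⬝ᵥ (G * M').mulVec b)
      = (x * (a ⬝ᵥ (M * (G * M')).mulVec b)
          + 2 * y * (z * (a ⬝ᵥ (M * (G * M')).mulVec b) - a ⬝ᵥ (M * M').mulVec b)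
          - a ⬝ᵥ (G * M').mulVec b)
        - (x' * (a ⬝ᵥ (M * (G * M')).mulVec b)
          + 2 * y' * (z * (a ⬝ᵥ (M * (G * M')).mulVec b) - a ⬝ᵥ (M * M').mulVec b)
          - a ⬝ᵥ (M * G).mulVec b)
        - a ⬝ᵥ (M * (G * (G * M'))).mulVec b := by
    rw [dot_mul_dot, hBig, hA, hB, hZmid, hGmid]
    simp only [Matrix.sub_mulVec, Matrix.add_mulVec, Matrix.smul_mulVec,
      dotProduct_sub, dotProduct_add, dotProduct_smul, smul_eq_mul]
  have expand : ∀ u v : ℂ, (1 + u) * (1 - v) = 1 + u - v - u * v := fun u v => by ring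
  rw [expand, huv]; ring


noncomputable def ell (a b : Fin N → ℂ) : Matrix (Fin N) (Fin N) ℂ →L[ℂ] ℂ :=
  LinearMap.toContinuousLinearMap
    { toFun := fun A => a ⬝ᵥ A.mulVec b
      map_add' := fun A B => by simp [Matrix.add_mulVec, dotProduct_add]
      map_smul' := fun r A => by simp [Matrix.smul_mulVec, dotProduct_smul] }

@[simp] lemma ell_apply (a b : Fin N → ℂ) (A : Matrix (Fin N) (Fin N) ℂ) :
    ell a b A = a ⬝ᵥ A.mulVec b := rfl

lemma hasDerivAt_resolvent (Z : Matrix (Fin N) (Fin N) ℂ) {z : ℂ}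
    (hz : IsUnit (z • (1 : Matrix (Fin N) (Fin N) ℂ) - Z)) :
    HasDerivAt (fun w : ℂ => (w • (1 : Matrix (Fin N) (Fin N) ℂ) - Z)⁻¹)
      (-((z • (1 : Matrix (Fin N) (Fin N) ℂ) - Z)⁻¹ * (z • 1 - Z)⁻¹)) z := by
  haveI : CompleteSpace (Matrix (Fin N) (Fin N) ℂ) := FiniteDimensional.complete ℂ _
  have hlin : HasDerivAt (fun w : ℂ => w • (1 : Matrix (Fin N) (Fin N) ℂ) - Z)
      (1 : Matrix (Fin N) (Fin N) ℂ) z := by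
    have := ((hasDerivAt_id z).smul_const (1 : Matrix (Fin N) (Fin N) ℂ)).sub_const Z
    simp only [id, one_smul] at this
    exact this
  have hinv := hasFDerivAt_ringInverse (𝕜 := ℂ) hz.unit
  rw [hz.unit_spec] at hinv
  have H := hinv.comp_hasDerivAt z hlin
  have h2 : (Ring.inverse ∘ fun w : ℂ => w • (1 : Matrix (Fin N) (Fin N) ℂ) - Z)
      = fun w : ℂ => (w • (1 : Matrix (Fin N) (Fin N) ℂ) - Z)⁻¹ := by
    funext w
    simp only [Function.comp_apply, Matrix.nonsing_inv_eq_ringInverse]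
  rw [h2] at H
  refine H.congr_deriv ?_
  have hcoe : ((hz.unit⁻¹ : (Matrix (Fin N) (Fin N) ℂ)ˣ) : Matrix (Fin N) (Fin N) ℂ)
      = (z • (1 : Matrix (Fin N) (Fin N) ℂ) - Z)⁻¹ := by
    rw [Matrix.coe_units_inv, hz.unit_spec]
  simp [ContinuousLinearMap.mulLeftRight_apply, hcoe]

lemma aux_main (M M' X Z : Matrix (Fin N) (Fin N) ℂ) (a b : Fin N → ℂ)
    (hrank : X * Z - Z * X - 1 = Matrix.vecMulVec b a)
    (x x' y y' : ℂ)
    (h1 : M * (x • 1 + (2 * y) • Z - X) = 1)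
    (h2 : (x' • 1 + (2 * y') • Z - X) * M' = 1)
    (c : ℂ) (R : ℝ) (hR : 0 < R)
    (hZ : ∀ z : ℂ, ‖z - c‖ = R → IsUnit (z • (1 : Matrix (Fin N) (Fin N) ℂ) - Z)) :
    (∮ z in C(c, R),
      Complex.exp ((x - x') * z + (y - y') * z ^ 2) *
        (1 + a ⬝ᵥ (M * (z • 1 - Z)⁻¹).mulVec b) *
        (1 - a ⬝ᵥ ((z • (1 : Matrix (Fin N) (Fin N) ℂ) - Z)⁻¹ * M').mulVec b)) = 0 := by
  haveI : CompleteSpace (Matrix (Fin N) (Fin N) ℂ) := FiniteDimensional.complete ℂ _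
  have hsphere : ∀ z ∈ Metric.sphere c R, IsUnit (z • (1 : Matrix (Fin N) (Fin N) ℂ) - Z) := by
    intro z hz
    exact hZ z (by simpa [Complex.dist_eq] using hz)
  have hcontE : Continuous fun z : ℂ => Complex.exp ((x - x') * z + (y - y') * z ^ 2) := by
    fun_prop
  have hEd : ∀ z : ℂ, HasDerivAt (fun w : ℂ => Complex.exp ((x - x') * w + (y - y') * w ^ 2))
      ((x - x' + 2 * (y - y') * z) * Complex.exp ((x - x') * z + (y - y') * z ^ 2)) z := by
    intro z
    have hp : HasDerivAt (fun w : ℂ => (x - x') * w + (y - y') * w ^ 2)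
        (x - x' + 2 * (y - y') * z) z := by
      have ha := (hasDerivAt_id z).const_mul (x - x')
      have hb := (hasDerivAt_pow 2 z).const_mul (y - y')
      exact (ha.add hb).congr_deriv (by push_cast; ring)
    simpa [mul_comm] using hp.cexp
  have hKd : ∀ z : ℂ, IsUnit (z • (1 : Matrix (Fin N) (Fin N) ℂ) - Z) →
      HasDerivAt (fun w : ℂ => a ⬝ᵥ (M * ((w • 1 - Z)⁻¹ * M')).mulVec b)
        (-(a ⬝ᵥ (M * ((z • 1 - Z)⁻¹ * ((z • 1 - Z)⁻¹ * M'))).mulVec b)) z := by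
    intro z hu
    have hG := hasDerivAt_resolvent Z hu
    have hmat := (hG.mul_const M').const_mul M
    have hcomp := (ell a b).hasFDerivAt.comp_hasDerivAt z hmat
    simp only [Function.comp_def, ell_apply] at hcomp
    refine hcomp.congr_deriv ?_
    have hm : M * (-((z • (1 : Matrix (Fin N) (Fin N) ℂ) - Z)⁻¹ * (z • 1 - Z)⁻¹) * M')
        = -(M * ((z • 1 - Z)⁻¹ * ((z • 1 - Z)⁻¹ * M'))) := by
      simp only [neg_mul, mul_neg, mul_assoc]
    rw [hm]
    change a ⬝ᵥ (-(M * ((z • 1 - Z)⁻¹ * ((z • 1 - Z)⁻¹ * M')))).mulVec b = _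
    simp [Matrix.neg_mulVec, dotProduct_neg]
  have hFd : ∀ z ∈ Metric.sphere c R,
      HasDerivAt (fun w : ℂ => Complex.exp ((x - x') * w + (y - y') * w ^ 2) *
          (a ⬝ᵥ (M * ((w • 1 - Z)⁻¹ * M')).mulVec b))
        (Complex.exp ((x - x') * z + (y - y') * z ^ 2) *
          ((x - x' + 2 * (y - y') * z) * (a ⬝ᵥ (M * ((z • 1 - Z)⁻¹ * M')).mulVec b)
            - a ⬝ᵥ (M * ((z • 1 - Z)⁻¹ * ((z • 1 - Z)⁻¹ * M'))).mulVec b)) z := by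
    intro z hz
    have := (hEd z).mul (hKd z (hsphere z hz))
    exact this.congr_deriv (by ring)
  have hcong : (∮ z in C(c, R),
      Complex.exp ((x - x') * z + (y - y') * z ^ 2) *
        (1 + a ⬝ᵥ (M * (z • 1 - Z)⁻¹).mulVec b) *
        (1 - a ⬝ᵥ ((z • (1 : Matrix (Fin N) (Fin N) ℂ) - Z)⁻¹ * M').mulVec b))
      = ∮ z in C(c, R),
        ((1 + 2 * (y - y') * (a ⬝ᵥ (M * M').mulVec b)) *
            Complex.exp ((x - x') * z + (y - y') * z ^ 2)
          - Complex.exp ((x - x') * z + (y - y') * z ^ 2) *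
            ((x - x' + 2 * (y - y') * z) * (a ⬝ᵥ (M * ((z • 1 - Z)⁻¹ * M')).mulVec b)
              - a ⬝ᵥ (M * ((z • 1 - Z)⁻¹ * ((z • 1 - Z)⁻¹ * M'))).mulVec b)) := by
    refine circleIntegral.integral_congr hR.le fun z hz => ?_
    have hu := hsphere z hz
    have hdet := (Matrix.isUnit_iff_isUnit_det _).mp hu
    have hu1 : (z • (1 : Matrix (Fin N) (Fin N) ℂ) - Z) * (z • 1 - Z)⁻¹ = 1 :=
      Matrix.mul_nonsing_inv _ hdet
    have hu2 : (z • (1 : Matrix (Fin N) (Fin N) ℂ) - Z)⁻¹ * (z • 1 - Z) = 1 :=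
      Matrix.nonsing_inv_mul _ hdet
    have kid := key_identity a b hrank h1 h2 hu1 hu2
    show Complex.exp ((x - x') * z + (y - y') * z ^ 2) *
        (1 + a ⬝ᵥ (M * (z • 1 - Z)⁻¹).mulVec b) *
        (1 - a ⬝ᵥ ((z • (1 : Matrix (Fin N) (Fin N) ℂ) - Z)⁻¹ * M').mulVec b) = _
    rw [mul_assoc, kid]
    ring
  rw [hcong]
  have hint1 : CircleIntegrable (fun z : ℂ =>
      (1 + 2 * (y - y') * (a ⬝ᵥ (M * M').mulVec b)) *
        Complex.exp ((x - x') * z + (y - y') * z ^ 2)) c R :=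
    (continuous_const.mul hcontE).continuousOn.circleIntegrable hR.le
  have hint2 : CircleIntegrable (fun z : ℂ =>
      Complex.exp ((x - x') * z + (y - y') * z ^ 2) *
        ((x - x' + 2 * (y - y') * z) * (a ⬝ᵥ (M * ((z • 1 - Z)⁻¹ * M')).mulVec b)
          - a ⬝ᵥ (M * ((z • 1 - Z)⁻¹ * ((z • 1 - Z)⁻¹ * M'))).mulVec b)) c R := by
    refine ContinuousOn.circleIntegrable hR.le fun z hz => ?_
    apply ContinuousAt.continuousWithinAt
    have hu := hsphere z hz
    have hG : ContinuousAt (fun w : ℂ => (w • (1 : Matrix (Fin N) (Fin N) ℂ) - Z)⁻¹) z :=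
      (hasDerivAt_resolvent Z hu).continuousAt
    have hK : ContinuousAt (fun w : ℂ => a ⬝ᵥ (M * ((w • 1 - Z)⁻¹ * M')).mulVec b) z :=
      (hKd z hu).continuousAt
    have hK2 : ContinuousAt
        (fun w : ℂ => a ⬝ᵥ (M * ((w • 1 - Z)⁻¹ * ((w • 1 - Z)⁻¹ * M'))).mulVec b) z := by
      have hmat : ContinuousAt
          (fun w : ℂ => M * ((w • (1 : Matrix (Fin N) (Fin N) ℂ) - Z)⁻¹ *
            ((w • 1 - Z)⁻¹ * M'))) z :=
        continuousAt_const.mul (hG.mul (hG.mul continuousAt_const))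
      exact ((ell a b).continuous.continuousAt).comp hmat
    exact hcontE.continuousAt.mul
      (((continuousAt_const.add (continuousAt_const.mul continuousAt_id)).mul hK).sub hK2)
  rw [circleIntegral.integral_sub hint1 hint2]
  have hz1 : (∮ z in C(c, R),
      (1 + 2 * (y - y') * (a ⬝ᵥ (M * M').mulVec b)) *
        Complex.exp ((x - x') * z + (y - y') * z ^ 2)) = 0 := by
    refine Complex.circleIntegral_eq_zero_of_differentiable_on_off_countable hR.le
      Set.countable_empty (continuous_const.mul hcontE).continuousOn fun z _ => ?_
    apply DifferentiableAt.const_mul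
    apply DifferentiableAt.cexp
    fun_prop
  have hz2 : (∮ z in C(c, R),
      Complex.exp ((x - x') * z + (y - y') * z ^ 2) *
        ((x - x' + 2 * (y - y') * z) * (a ⬝ᵥ (M * ((z • 1 - Z)⁻¹ * M')).mulVec b)
          - a ⬝ᵥ (M * ((z • 1 - Z)⁻¹ * ((z • 1 - Z)⁻¹ * M'))).mulVec b)) = 0 :=
    circleIntegral.integral_eq_zero_of_hasDerivWithinAt hR.le
      fun z hz => (hFd z hz).hasDerivWithinAt
  rw [hz1, hz2, sub_zero]

/-- The product of a wave function from the adelic Grassmannian with its adjoint,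
`ψ_𝒳(x,y,z)·ψ_{𝒳*}(x',−y',−z)`, has vanishing integral over any circle avoiding the
eigenvalues of `Z`; in particular it has zero residue at every pole in `z`. -/
theorem circleIntegral_wave_adjoint_product_eq_zero {N : ℕ} (hN : 0 < N)
    (X Z : Matrix (Fin N) (Fin N) ℂ) (a b : Fin N → ℂ)
    (hrank : X * Z - Z * X - 1 = Matrix.vecMulVec b a)
    (x x' y y' : ℂ)
    (hX1 : IsUnit (x • (1 : Matrix (Fin N) (Fin N) ℂ) + (2 * y) • Z - X))
    (hX2 : IsUnit (x' • (1 : Matrix (Fin N) (Fin N) ℂ) + (2 * y') • Z - X))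
    (c : ℂ) (R : ℝ) (hR : 0 < R)
    (hZ : ∀ z : ℂ, ‖z - c‖ = R → IsUnit (z • (1 : Matrix (Fin N) (Fin N) ℂ) - Z)) :
    (∮ z in C(c, R),
      Complex.exp ((x - x') * z + (y - y') * z ^ 2) *
        (1 + a ⬝ᵥ ((x • (1 : Matrix (Fin N) (Fin N) ℂ) + (2 * y) • Z - X)⁻¹
            * (z • 1 - Z)⁻¹).mulVec b) *
        (1 - a ⬝ᵥ ((z • (1 : Matrix (Fin N) (Fin N) ℂ) - Z)⁻¹
            * (x' • 1 + (2 * y') • Z - X)⁻¹).mulVec b)) = 0 := by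
  have h1 : (x • (1 : Matrix (Fin N) (Fin N) ℂ) + (2 * y) • Z - X)⁻¹
      * (x • 1 + (2 * y) • Z - X) = 1 :=
    Matrix.nonsing_inv_mul _ ((Matrix.isUnit_iff_isUnit_det _).mp hX1)
  have h2 : (x' • (1 : Matrix (Fin N) (Fin N) ℂ) + (2 * y') • Z - X)
      * (x' • 1 + (2 * y') • Z - X)⁻¹ = 1 :=
    Matrix.mul_nonsing_inv _ ((Matrix.isUnit_iff_isUnit_det _).mp hX2)
  exact aux_main _ _ X Z a b hrank x x' y y' h1 h2 c R hR hZ
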